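/- The spider tree T* obtained from a single center vertex by attaching two paths of length 2 and one path of length 4 (a tree on 9 vertices) has domination number 4 and has exactly 18 minimum dominating sets; in particular, there exists a tree with domination number γ having more than 2^γ minimum dominating sets. -/

import Mathlib

/-- `D` is a dominating set of `G`: every vertex outside `D` has a neighbor in `D`. -/
def Dominates {V : Type*} (G : SimpleGraph V) (D : Set V) : Prop :=
  ∀ v ∉ D, ∃ u ∈ D, G.Adj u v

/-- The domination number of `G`: the minimum cardinality of a dominating set. -/
noncomputable def domN {V : Type*} (G : SimpleGraph V) : ℕ :=
  sInf {n | ∃ D : Set V, Dominates G D ∧ D.ncard = n}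

/-- `D` is a minimum dominating set of `G`. -/
def MinDomSet {V : Type*} (G : SimpleGraph V) (D : Set V) : Prop :=
  Dominates G D ∧ D.ncard = domN G

/-- The number of minimum dominating sets of `G`. -/
noncomputable def numMinDomSets {V : Type*} (G : SimpleGraph V) : ℕ :=
  {D : Set V | MinDomSet G D}.ncard

/-- An endvertex: a vertex of degree at most 1. -/
def IsEndvtx {V : Type*} (G : SimpleGraph V) (v : V) : Prop :=
  (G.neighborSet v).ncard ≤ 1

/-- A strong support vertex: a vertex adjacent to at least two endvertices. -/
def IsStrongSupportVtx {V : Type*} (G : SimpleGraph V) (v : V) : Prop :=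
  ∃ a b : V, a ≠ b ∧ G.Adj v a ∧ G.Adj v b ∧ IsEndvtx G a ∧ IsEndvtx G b

/-- The spider tree `T*` on 9 vertices: center `0`, two paths of length 2
(`0-1-2` and `0-3-4`) and one path of length 4 (`0-5-6-7-8`). -/
def TStar : SimpleGraph (Fin 9) :=
  SimpleGraph.fromRel fun a b =>
    (a = 0 ∧ b = 1) ∨ (a = 1 ∧ b = 2) ∨ (a = 0 ∧ b = 3) ∨ (a = 3 ∧ b = 4) ∨
    (a = 0 ∧ b = 5) ∨ (a = 5 ∧ b = 6) ∨ (a = 6 ∧ b = 7) ∨ (a = 7 ∧ b = 8)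

instance : DecidableRel TStar.Adj := fun a b =>
  decidable_of_iff _ (SimpleGraph.fromRel_adj _ a b).symm

instance (v w : Fin 9) :
    DecidableRel (TStar \ SimpleGraph.fromEdgeSet {s(v, w)}).Adj := fun a b =>
  decidable_of_iff (TStar.Adj a b ∧ ¬(s(a, b) = s(v, w) ∧ a ≠ b)) (by
    simp only [SimpleGraph.sdiff_adj, SimpleGraph.fromEdgeSet_adj, Set.mem_singleton_iff])

/-- Domination as a decidable predicate on finsets. -/
def domF (s : Finset (Fin 9)) : Prop := ∀ v ∉ s, ∃ u ∈ s, TStar.Adj u v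

instance : DecidablePred domF := fun s => by unfold domF; infer_instance

lemma dom_coe (s : Finset (Fin 9)) : Dominates TStar ↑s ↔ domF s := by
  simp [Dominates, domF]

lemma setEq : {n | ∃ D : Set (Fin 9), Dominates TStar D ∧ D.ncard = n}
    = {n | ∃ s : Finset (Fin 9), domF s ∧ s.card = n} := by
  ext n
  constructor
  · rintro ⟨D, hD, rfl⟩
    refine ⟨D.toFinite.toFinset, ?_, ?_⟩
    · rw [← dom_coe]; rwa [Set.Finite.coe_toFinset]
    · rw [Set.ncard_eq_toFinset_card D D.toFinite]
  · rintro ⟨s, hs, rfl⟩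
    exact ⟨↑s, (dom_coe s).mpr hs, Set.ncard_coe_finset s⟩

set_option maxRecDepth 20000 in
set_option maxHeartbeats 4000000 in
lemma key : ∀ s : Finset (Fin 9), domF s → 4 ≤ s.card := by decide

lemma domN_eq : domN TStar = 4 := by
  rw [domN, setEq]
  refine le_antisymm (Nat.sInf_le ⟨{1,3,5,7}, by decide, by decide⟩) ?_
  refine le_csInf ⟨4, {1,3,5,7}, by decide, by decide⟩ ?_
  rintro n ⟨s, hs, rfl⟩
  exact key s hs

set_option maxRecDepth 20000 in
set_option maxHeartbeats 4000000 in
lemma count18 : ((Finset.univ : Finset (Finset (Fin 9))).filter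
    fun s => domF s ∧ s.card = 4).card = 18 := by decide

lemma minDomSet_image : {D : Set (Fin 9) | MinDomSet TStar D}
    = (SetLike.coe : Finset (Fin 9) → Set (Fin 9)) '' {s : Finset (Fin 9) | domF s ∧ s.card = 4} := by
  ext D
  simp only [Set.mem_setOf_eq, Set.mem_image, MinDomSet, domN_eq]
  constructor
  · rintro ⟨hD, hc⟩
    refine ⟨D.toFinite.toFinset, ⟨?_, ?_⟩, D.toFinite.coe_toFinset⟩
    · rw [← dom_coe]; rwa [Set.Finite.coe_toFinset]
    · rw [← Set.ncard_eq_toFinset_card D D.toFinite]; exact hc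
  · rintro ⟨s, ⟨hs, hc⟩, rfl⟩
    exact ⟨(dom_coe s).mpr hs, by rwa [Set.ncard_coe_finset]⟩

lemma numMinDomSets_eq : numMinDomSets TStar = 18 := by
  rw [numMinDomSets, minDomSet_image,
    Set.ncard_image_of_injective _ Finset.coe_injective]
  rw [← count18, Set.ncard_eq_toFinset_card', Set.toFinset_setOf]

set_option maxRecDepth 20000 in
set_option maxHeartbeats 8000000 in
lemma TStar_isTree : TStar.IsTree := by
  constructor
  · rw [SimpleGraph.connected_iff]
    exact ⟨by decide, ⟨0⟩⟩
  · rw [SimpleGraph.isAcyclic_iff_forall_adj_isBridge]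
    intro v w h
    rw [SimpleGraph.isBridge_iff]
    revert h
    revert v w
    decide

/-- the spider `T*` has domination number 4 and exactly 18 minimum
dominating sets; in particular there exists a tree with domination number γ
having more than 2^γ minimum dominating sets. -/
theorem TStar_domN_numMinDomSets :
    domN TStar = 4 ∧ numMinDomSets TStar = 18 ∧
      ∃ (n : ℕ) (G : SimpleGraph (Fin n)), G.IsTree ∧ 2 ^ domN G < numMinDomSets G := by
  refine ⟨domN_eq, numMinDomSets_eq, 9, TStar, TStar_isTree, ?_⟩
  rw [domN_eq, numMinDomSets_eq]
  norm_num
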